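/- arXiv:2306.01467 — 7 statements merged into one kernel-verified Lean document; each statement's English description precedes it below -/
import Mathlib

section
/- Let X be a Banach space, f ∈ S_{X*} a norm-one functional, and α > 0. Then the diameter of the slice S(B_X, f, α) = {x ∈ B_X : f(x) > 1 - α} equals the diameter of the weak-star slice S(B_{X**}, f, α) = {F ∈ B_{X**} : F(f) > 1 - α} of the bidual unit ball (under the canonical embedding of X into X**). -/
open NormedSpace Metric

/-- A baby Goldstine theorem: any `F` in the bidual ball can be weak-star approximated on two
functionals by elements of the unit ball. -/
lemma goldstine_two (X : Type*) [NormedAddCommGroup X] [NormedSpace ℝ X]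
    (F : StrongDual ℝ (StrongDual ℝ X)) (hF : ‖F‖ ≤ 1) (f g : StrongDual ℝ X) {ε : ℝ} (hε : 0 < ε) :
    ∃ x : X, ‖x‖ ≤ 1 ∧ |f x - F f| < ε ∧ |g x - F g| < ε := by
  set T : X →ₗ[ℝ] ℝ × ℝ := (f : X →ₗ[ℝ] ℝ).prod (g : X →ₗ[ℝ] ℝ) with hT
  set C : Set (ℝ × ℝ) := closure (T '' Metric.closedBall (0 : X) 1) with hC
  have hconv : Convex ℝ C :=
    ((convex_closedBall (0 : X) 1).linear_image T).closure
  by_cases hp : (F f, F g) ∈ C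
  · rcases Metric.mem_closure_iff.1 hp ε hε with ⟨b, hb, hdist⟩
    rcases hb with ⟨x, hx, rfl⟩
    rw [Metric.mem_closedBall, dist_zero_right] at hx
    rw [Prod.dist_eq, max_lt_iff] at hdist
    refine ⟨x, hx, ?_, ?_⟩
    · have := hdist.1
      rwa [Real.dist_eq, abs_sub_comm] at this
    · have := hdist.2
      rwa [Real.dist_eq, abs_sub_comm] at this
  · exfalso
    obtain ⟨φ, u, hlt, hu⟩ := geometric_hahn_banach_closed_point hconv isClosed_closure hp
    set a := φ (1, 0) with ha
    set b := φ (0, 1) with hb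
    have hφ : ∀ c d : ℝ, φ (c, d) = c * a + d * b := by
      intro c d
      have hcd : (c, d) = c • ((1 : ℝ), (0 : ℝ)) + d • ((0 : ℝ), (1 : ℝ)) := by
        simp [Prod.ext_iff]
      rw [hcd, map_add, map_smul, map_smul, smul_eq_mul, smul_eq_mul]
    set h : StrongDual ℝ X := a • f + b • g with hh
    have hball : ∀ x : X, ‖x‖ ≤ 1 → h x < u ∧ -h x < u := by
      intro x hx
      have hmem : ∀ y : X, ‖y‖ ≤ 1 → h y < u := by
        intro y hy
        have : T y ∈ C := subset_closure ⟨y, by simpa using hy, rfl⟩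
        have := hlt _ this
        have hTy : φ (T y) = f y * a + g y * b := hφ _ _
        simp only [hT, LinearMap.prod_apply, Pi.prod] at hTy
        have hhy : h y = f y * a + g y * b := by
          simp [hh, mul_comm]
        rw [hhy, ← hTy]
        exact this
      refine ⟨hmem x hx, ?_⟩
      have := hmem (-x) (by simpa using hx)
      simpa using this
    have hu0 : 0 < u := by
      have h0 : (0 : ℝ × ℝ) ∈ C := subset_closure ⟨0, by simp, by simp [hT]⟩
      have := hlt _ h0
      simpa using this
    have hnorm : ‖h‖ ≤ u := by
      refine h.opNorm_le_bound hu0.le (fun x => ?_)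
      rcases eq_or_ne x 0 with rfl | hx0
      · simp [mul_nonneg hu0.le (norm_nonneg (0 : X))]
      · have hxpos : 0 < ‖x‖ := norm_pos_iff.2 hx0
        have hone : ‖x‖⁻¹ * ‖x‖ = 1 := inv_mul_cancel₀ hxpos.ne'
        have hx : ‖(‖x‖⁻¹ • x)‖ ≤ 1 := by
          rw [norm_smul, norm_inv, norm_norm, hone]
        have hb := hball _ hx
        have h1 : h (‖x‖⁻¹ • x) = ‖x‖⁻¹ * h x := by rw [map_smul, smul_eq_mul]
        rw [h1] at hb
        have h2 : |‖x‖⁻¹ * h x| ≤ u := abs_le.2 ⟨by linarith [hb.2], hb.1.le⟩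
        rw [abs_mul, abs_of_nonneg (inv_nonneg.2 hxpos.le)] at h2
        rw [Real.norm_eq_abs]
        nlinarith [abs_nonneg (h x)]
    have hFh : F h = F f * a + F g * b := by
      simp [hh, mul_comm]
    have hφp : φ (F f, F g) = F f * a + F g * b := hφ _ _
    have hFh_le : F h ≤ u := by
      calc F h ≤ |F h| := le_abs_self _
        _ = ‖F h‖ := (Real.norm_eq_abs _).symm
        _ ≤ ‖F‖ * ‖h‖ := F.le_opNorm h
        _ ≤ 1 * u := mul_le_mul hF hnorm (norm_nonneg _) zero_le_one
        _ = u := one_mul u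
    rw [hφp, ← hFh] at hu
    linarith

/-- For a Banach space `X`, a norm-one functional `f ∈ S_{X*}` and `α > 0`,
the diameter of the slice `S(B_X, f, α) = {x ∈ X : f(x) > 1 - α}` equals the diameter of
the weak-star slice `S(B_{X**}, f, α) = {F ∈ B_{X**} : F(f) > 1 - α}` of the bidual unit
ball. -/
theorem slice_diam_eq_bidual_slice_diam
    (X : Type*) [NormedAddCommGroup X] [NormedSpace ℝ X] [CompleteSpace X]
    (f : StrongDual ℝ X) (hf : ‖f‖ = 1) (α : ℝ) (hα : 0 < α) :
    Metric.diam {x : X | ‖x‖ ≤ 1 ∧ f x > 1 - α} =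
      Metric.diam {F : StrongDual ℝ (StrongDual ℝ X) | ‖F‖ ≤ 1 ∧ F f > 1 - α} := by
  set A : Set X := {x : X | ‖x‖ ≤ 1 ∧ f x > 1 - α} with hA
  set B : Set (StrongDual ℝ (StrongDual ℝ X)) := {F : StrongDual ℝ (StrongDual ℝ X) | ‖F‖ ≤ 1 ∧ F f > 1 - α} with hB
  set J : X →ₗᵢ[ℝ] StrongDual ℝ (StrongDual ℝ X) := inclusionInDoubleDualLi ℝ with hJ
  have hBbdd : Bornology.IsBounded B := by
    apply Metric.isBounded_closedBall (x := (0 : StrongDual ℝ (StrongDual ℝ X))) (r := 1) |>.subset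
    intro F hF
    rw [Metric.mem_closedBall, dist_zero_right (a := F)]
    exact hF.1
  have hAbdd : Bornology.IsBounded A := by
    apply Metric.isBounded_closedBall (x := (0 : X)) (r := 1) |>.subset
    intro x hx
    rw [Metric.mem_closedBall, dist_zero_right]
    exact hx.1
  apply le_antisymm
  · -- A embeds isometrically into B
    have himg : J '' A ⊆ B := by
      rintro _ ⟨x, hx, rfl⟩
      refine ⟨by rw [J.norm_map]; exact hx.1, ?_⟩
      have : (J x) f = f x := by
        simp [hJ, NormedSpace.inclusionInDoubleDualLi, NormedSpace.dual_def]
      rw [this]; exact hx.2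
    calc Metric.diam A = Metric.diam (J '' A) := (J.isometry.diam_image A).symm
      _ ≤ Metric.diam B := Metric.diam_mono himg hBbdd
  · refine Metric.diam_le_of_forall_dist_le Metric.diam_nonneg ?_
    intro F hF G hG
    rw [dist_eq_norm (a := F)]
    refine le_of_forall_pos_le_add ?_
    intro ε hε
    -- find a functional nearly attaining ‖F - G‖
    have hmain : ∀ g : StrongDual ℝ X, ‖g‖ ≤ 1 → (F - G) g ≤ Metric.diam A + ε / 2 := by
      intro g hg
      set δ : ℝ := min (ε / 8) (min (F f - (1 - α)) (G f - (1 - α))) with hδ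
      have hδpos : 0 < δ := by
        apply lt_min (by linarith)
        exact lt_min (by linarith [hF.2]) (by linarith [hG.2])
      obtain ⟨x, hx1, hxf, hxg⟩ := goldstine_two X F hF.1 f g hδpos
      obtain ⟨y, hy1, hyf, hyg⟩ := goldstine_two X G hG.1 f g hδpos
      have hxA : x ∈ A := by
        refine ⟨hx1, ?_⟩
        have h1 : δ ≤ F f - (1 - α) := le_trans (min_le_right _ _) (min_le_left _ _)
        have := abs_lt.1 hxf
        linarith [this.1]
      have hyA : y ∈ A := by
        refine ⟨hy1, ?_⟩
        have h1 : δ ≤ G f - (1 - α) := le_trans (min_le_right _ _) (min_le_right _ _)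
        have := abs_lt.1 hyf
        linarith [this.1]
      have hdist : ‖x - y‖ ≤ Metric.diam A := by
        have := Metric.dist_le_diam_of_mem hAbdd hxA hyA
        rwa [dist_eq_norm] at this
      have hgxy : g (x - y) ≤ ‖x - y‖ := by
        calc g (x - y) ≤ |g (x - y)| := le_abs_self _
          _ = ‖g (x - y)‖ := (Real.norm_eq_abs _).symm
          _ ≤ ‖g‖ * ‖x - y‖ := g.le_opNorm _
          _ ≤ 1 * ‖x - y‖ := by
              apply mul_le_mul_of_nonneg_right hg (norm_nonneg _)
          _ = ‖x - y‖ := one_mul _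
      have hδε : δ ≤ ε / 8 := min_le_left _ _
      have hFGg : (F - G) g = F g - G g := by simp
      have hx' := abs_lt.1 hxg
      have hy' := abs_lt.1 hyg
      have hgsub : g (x - y) = g x - g y := by simp
      linarith [hx'.1, hx'.2, hy'.1, hy'.2]
    by_cases hzero : ‖F - G‖ ≤ ε / 2
    · linarith [Metric.diam_nonneg (s := A), hε]
    · push_neg at hzero
      obtain ⟨g, hg1, hg2⟩ := (F - G).exists_lt_apply_of_lt_opNorm
        (r := ‖F - G‖ - ε / 2) (by linarith)
      rw [Real.norm_eq_abs] at hg2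
      rcases abs_cases ((F - G) g) with ⟨heq, _⟩ | ⟨heq, _⟩
      · have := hmain g hg1.le
        linarith
      · have := hmain (-g) (by rw [norm_neg]; exact hg1.le)
        rw [map_neg] at this
        linarith
end

section
/- Let X be a Banach space, f ∈ S_{X*}, and α > 0. Define the radius r(S) of a slice S as inf{r > 0 : S ⊆ B(x, r) for some x ∈ X}. Then r(S(B_X, f, α)) ≥ r(S(B_{X**}, f, α)), where the second slice is taken in the bidual unit ball with center allowed to range over X**. -/
open NormedSpace Metric

/-- Approximate Helly lemma for two functionals: for `F` in the bidual with `‖F‖ ≤ 1`,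
any two functionals can be approximately realized by a point of norm `< 1 + ε`. -/
lemma helly_two {X : Type*} [NormedAddCommGroup X] [NormedSpace ℝ X]
    (F : StrongDual ℝ (StrongDual ℝ X)) (hF : ‖F‖ ≤ 1) (f g : StrongDual ℝ X) {ε δ : ℝ}
    (hε : 0 < ε) (hδ : 0 < δ) :
    ∃ x : X, ‖x‖ < 1 + ε ∧ |f x - F f| < δ ∧ |g x - F g| < δ := by
  set c : ℝ := 1 + ε with hc
  have hc1 : (1 : ℝ) < c := by simp [hc, hε]
  set L : X →ₗ[ℝ] ℝ × ℝ := LinearMap.prod (f : X →ₗ[ℝ] ℝ) (g : X →ₗ[ℝ] ℝ) with hL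
  set s : Set (ℝ × ℝ) := L '' Metric.ball (0 : X) c with hs
  have hconv : Convex ℝ s := (convex_ball (0 : X) c).linear_image L
  have hmem : (F f, F g) ∈ closure s := by
    by_contra hnot
    obtain ⟨φ, u, hlt, hgt⟩ :=
      geometric_hahn_banach_closed_point (hconv.closure) isClosed_closure hnot
    have hlt' : ∀ x : X, ‖x‖ < c → φ (f x, g x) < u := fun x hx =>
      hlt _ (subset_closure ⟨x, by simpa using hx, rfl⟩)
    -- express φ via two scalars
    set a : ℝ := φ (1, 0) with ha
    set b : ℝ := φ (0, 1) with hb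
    have hφ : ∀ p : ℝ × ℝ, φ p = a * p.1 + b * p.2 := by
      intro p
      have : p = p.1 • ((1 : ℝ), (0 : ℝ)) + p.2 • ((0 : ℝ), (1 : ℝ)) := by
        simp [Prod.ext_iff]
      rw [this, map_add, map_smul, map_smul]
      simp [ha, hb, mul_comm]
    set h : StrongDual ℝ X := a • f + b • g with hh
    have hhx : ∀ x : X, h x = a * f x + b * g x := by
      intro x; simp [hh, mul_comm]
    have hFh : F h = a * F f + b * F g := by
      simp [hh, mul_comm]
    have hu_lt : u < F h := by
      rw [hFh, ← hφ (F f, F g)]; exact hgt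
    have hu_pos : 0 < u := by
      have := hlt' 0 (by simpa using (lt_trans one_pos hc1))
      simpa [hφ] using this
    have hball : ∀ x : X, ‖x‖ < c → h x < u := by
      intro x hx
      have := hlt' x hx
      rwa [hφ, ← hhx] at this
    -- F h ≤ ‖h‖ since ‖F‖ ≤ 1
    have hFh_le : F h ≤ ‖h‖ := by
      calc F h ≤ ‖F h‖ := le_abs_self _
        _ ≤ ‖F‖ * ‖h‖ := F.le_opNorm h
        _ ≤ 1 * ‖h‖ := by
            exact mul_le_mul_of_nonneg_right hF (norm_nonneg _)
        _ = ‖h‖ := one_mul _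
    have hlt_norm : u / c < ‖h‖ := by
      have h1 : u / c < u := by
        rw [div_lt_iff₀ (lt_trans one_pos hc1)]
        nlinarith
      exact lt_of_lt_of_le (lt_trans h1 hu_lt) hFh_le
    obtain ⟨x, hx1, hx2⟩ := h.exists_lt_apply_of_lt_opNorm hlt_norm
    have hxc : ‖c • x‖ < c := by
      rw [norm_smul, Real.norm_eq_abs, abs_of_pos (lt_trans one_pos hc1)]
      nlinarith [lt_trans one_pos hc1]
    have hxc' : ‖-(c • x)‖ < c := by rwa [norm_neg]
    have h1 := hball (c • x) hxc
    have h2 := hball (-(c • x)) hxc'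
    rw [map_neg] at h2
    have : |h (c • x)| < u := abs_lt.2 ⟨by linarith, h1⟩
    have hgt' : u < |h (c • x)| := by
      rw [map_smul, smul_eq_mul, abs_mul, abs_of_pos (lt_trans one_pos hc1)]
      calc u = c * (u / c) := by field_simp
        _ < c * |h x| := by
            exact mul_lt_mul_of_pos_left (by simpa [Real.norm_eq_abs] using hx2)
              (lt_trans one_pos hc1)
    linarith
  rw [Metric.mem_closure_iff] at hmem
  obtain ⟨p, hp, hd⟩ := hmem δ hδ
  obtain ⟨x, hx, rfl⟩ := hp
  rw [Prod.dist_eq] at hd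
  have hd1 : dist (F f) ((L x).1) < δ := lt_of_le_of_lt (le_max_left _ _) hd
  have hd2 : dist (F g) ((L x).2) < δ := lt_of_le_of_lt (le_max_right _ _) hd
  simp only [hL, LinearMap.prod_apply, Function.prod, ContinuousLinearMap.coe_coe] at hd1 hd2
  refine ⟨x, by simpa using hx, ?_, ?_⟩
  · rwa [Real.dist_eq, abs_sub_comm] at hd1
  · rwa [Real.dist_eq, abs_sub_comm] at hd2

/-- Key lemma: if the slice in `X` is covered by a ball of radius `r`, the bidual slice
is covered by the ball of the same radius centered at the image of the same center. -/
lemma bidual_slice_subset {X : Type*} [NormedAddCommGroup X] [NormedSpace ℝ X]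
    (f : StrongDual ℝ X) (α : ℝ) (hα : 0 < α) (x₀ : X) (r : ℝ) (hr : 0 < r)
    (hcov : {x : X | ‖x‖ ≤ 1 ∧ f x > 1 - α} ⊆ Metric.closedBall x₀ r)
    (F : StrongDual ℝ (StrongDual ℝ X)) (hF1 : ‖F‖ ≤ 1) (hFf : F f > 1 - α) :
    F ∈ Metric.closedBall (inclusionInDoubleDual ℝ X x₀) r := by
  rw [Metric.mem_closedBall, dist_eq_norm F (inclusionInDoubleDual ℝ X x₀)]
  -- it suffices to bound on unit vectors
  have key : ∀ g : StrongDual ℝ X, ‖g‖ ≤ 1 → |F g - g x₀| ≤ r := by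
    intro g hg
    -- show ≤ r + η for all η > 0
    have hη : ∀ η : ℝ, 0 < η → |F g - g x₀| ≤ r + η := by
      intro η hηpos
      set t : ℝ := F f - (1 - α) with ht
      have htpos : 0 < t := by simp [ht]; linarith
      set ε : ℝ := min (η / 2) (t / 4) with hε
      have hεpos : 0 < ε := lt_min (by linarith) (by linarith)
      obtain ⟨x, hxn, hxf, hxg⟩ := helly_two F hF1 f g hεpos hεpos
      have h1ε : (0:ℝ) < 1 + ε := by linarith
      set x' : X := (1 + ε)⁻¹ • x with hx'
      have hx'n : ‖x'‖ ≤ 1 := by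
        rw [hx', norm_smul, Real.norm_eq_abs, abs_of_pos (by positivity)]
        rw [inv_mul_le_iff₀ h1ε, mul_one]
        linarith
      have hfx : f x > F f - ε := by
        have := abs_lt.1 hxf
        linarith [this.1]
      have hx'f : f x' > 1 - α := by
        rw [hx', map_smul, smul_eq_mul]
        rw [gt_iff_lt, ← sub_pos]
        have hεt : ε ≤ t / 4 := min_le_right _ _
        have h1a : 1 - α < 1 := by linarith
        have : (1 - α) * (1 + ε) < F f - ε := by nlinarith
        have hlt : (1 - α) * (1 + ε) < f x := by linarith
        have := (div_lt_div_iff_of_pos_right h1ε).2 hlt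
        rw [mul_div_assoc, div_self (ne_of_gt h1ε), mul_one] at this
        rw [div_eq_inv_mul] at this
        linarith
      have hx'ball := hcov ⟨hx'n, hx'f⟩
      rw [Metric.mem_closedBall, dist_eq_norm] at hx'ball
      have hgx' : |g x' - g x₀| ≤ r := by
        calc |g x' - g x₀| = ‖g (x' - x₀)‖ := by rw [map_sub]; rfl
          _ ≤ ‖g‖ * ‖x' - x₀‖ := g.le_opNorm _
          _ ≤ 1 * r := mul_le_mul hg hx'ball (norm_nonneg _) zero_le_one
          _ = r := one_mul _
      have hxx' : ‖x - x'‖ ≤ ε := by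
        have : x - x' = (1 - (1+ε)⁻¹) • x := by
          rw [hx', sub_smul, one_smul]
        rw [this, norm_smul, Real.norm_eq_abs]
        have h1 : (1+ε)⁻¹ ≤ 1 := by
          rw [inv_le_one_iff₀]; right; linarith
        have h2 : 0 ≤ 1 - (1+ε)⁻¹ := by linarith
        rw [abs_of_nonneg h2]
        have : 1 - (1+ε)⁻¹ = ε / (1+ε) := by field_simp; ring
        rw [this]
        rw [div_mul_eq_mul_div, div_le_iff₀ h1ε]
        nlinarith [hεpos.le, norm_nonneg x]
      have hgxx' : |g x - g x'| ≤ ε := by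
        calc |g x - g x'| = ‖g (x - x')‖ := by rw [map_sub]; rfl
          _ ≤ ‖g‖ * ‖x - x'‖ := g.le_opNorm _
          _ ≤ 1 * ε := mul_le_mul hg hxx' (norm_nonneg _) zero_le_one
          _ = ε := one_mul _
      have hεη : ε ≤ η / 2 := min_le_left _ _
      calc |F g - g x₀| ≤ |F g - g x| + |g x - g x'| + |g x' - g x₀| := by
            have := abs_sub_le (F g) (g x) (g x₀)
            have := abs_sub_le (g x) (g x') (g x₀)
            set A := F g; set B := g x; set C := g x'; set D := g x₀
            calc |A - D| ≤ |A - B| + |B - D| := abs_sub_le _ _ _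
              _ ≤ |A - B| + (|B - C| + |C - D|) := by
                  linarith [abs_sub_le B C D]
              _ = |A - B| + |B - C| + |C - D| := by ring
        _ ≤ ε + ε + r := by
            have : |F g - g x| = |g x - F g| := abs_sub_comm _ _
            rw [this]
            linarith [hxg, hgxx', hgx']
        _ ≤ r + η := by linarith
    by_contra hcon
    push_neg at hcon
    have := hη ((|F g - g x₀| - r) / 2) (by linarith)
    linarith
  -- now conclude the norm bound
  refine ContinuousLinearMap.opNorm_le_bound _ hr.le ?_
  intro g
  rcases eq_or_ne g 0 with rfl | hg0
  · simp
  · have hgn : 0 < ‖g‖ := norm_pos_iff.2 hg0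
    have hgu : ‖‖g‖⁻¹ • g‖ ≤ 1 := by
      rw [norm_smul, Real.norm_eq_abs, abs_of_pos (by positivity), inv_mul_cancel₀ hgn.ne']
    have := key (‖g‖⁻¹ • g) hgu
    rw [map_smul, smul_eq_mul] at this
    have happ : (F - inclusionInDoubleDual ℝ X x₀) g = F g - g x₀ := by
      simp [dual_def]
    rw [happ, Real.norm_eq_abs]
    have h2 : |‖g‖⁻¹ * F g - (‖g‖⁻¹ • g) x₀| = ‖g‖⁻¹ * |F g - g x₀| := by
      rw [ContinuousLinearMap.smul_apply, smul_eq_mul, ← mul_sub, abs_mul,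
        abs_of_pos (by positivity)]
    rw [h2] at this
    calc |F g - g x₀| = ‖g‖ * (‖g‖⁻¹ * |F g - g x₀|) := by field_simp
      _ ≤ ‖g‖ * r := mul_le_mul_of_nonneg_left this (norm_nonneg _)
      _ = r * ‖g‖ := mul_comm _ _

/-- The radius of a bounded set `S` in a normed space `Y`:
`r(S) = inf {r > 0 : S ⊆ B(y, r) for some y ∈ Y}` (closed balls). -/
noncomputable def sliceRadius {Y : Type*} [NormedAddCommGroup Y] (S : Set Y) : ℝ :=
  sInf {r : ℝ | 0 < r ∧ ∃ y : Y, S ⊆ Metric.closedBall y r}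

/-- For a Banach space `X`, `f ∈ S_{X*}` and `α > 0`, the radius of the
slice `S(B_X, f, α)` (centers in `X`) is at least the radius of the bidual slice
`S(B_{X**}, f, α)` (centers in `X**`). -/
theorem slice_radius_ge_bidual_slice_radius
    (X : Type*) [NormedAddCommGroup X] [NormedSpace ℝ X] [CompleteSpace X]
    (f : StrongDual ℝ X) (hf : ‖f‖ = 1) (α : ℝ) (hα : 0 < α) :
    sliceRadius {F : StrongDual ℝ (StrongDual ℝ X) | ‖F‖ ≤ 1 ∧ F f > 1 - α} ≤
      sliceRadius {x : X | ‖x‖ ≤ 1 ∧ f x > 1 - α} := by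
  unfold sliceRadius
  apply csInf_le_csInf
  · exact ⟨0, fun r hr => hr.1.le⟩
  · refine ⟨2, two_pos, 0, fun x hx => ?_⟩
    rw [Metric.mem_closedBall, dist_zero_right]
    linarith [hx.1]
  · rintro r ⟨hrpos, x₀, hcov⟩
    exact ⟨hrpos, inclusionInDoubleDual ℝ X x₀,
      fun F hF => bidual_slice_subset f α hα x₀ r hrpos hcov F hF.1 hF.2⟩
end

section
/- Let X = (⊕_{n=1}^∞ X_n)_{ℓ1} be an ℓ1-sum of Banach spaces, let n ∈ ℕ, x_n* ∈ S_{X_n*}, and α > 0. Consider the slice S of B_X defined by the functional f(x_k) := x_n*(x_n). Then for any (x_k), (y_k) ∈ S one has ‖(x_k) - (y_k)‖ ≤ diam(S(B_{X_n}, x_n*, α)) + 2α. In particular diam(S) ≤ diam(S(B_{X_n}, x_n*, α)) + 2α. -/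
open NormedSpace Metric

instance : Fact ((1 : ENNReal) ≤ 1) := ⟨le_rfl⟩

lemma lp_one_norm_eq {X : ℕ → Type*} [∀ k, NormedAddCommGroup (X k)] (x : lp X 1) :
    ‖x‖ = ∑' k, ‖x k‖ := by
  have := lp.norm_eq_tsum_rpow (p := 1) (by norm_num) x
  simpa using this

lemma lp_one_summable {X : ℕ → Type*} [∀ k, NormedAddCommGroup (X k)] (x : lp X 1) :
    Summable fun k => ‖x k‖ := by
  have := (lp.memℓp x).summable (p := 1) (by norm_num)
  simpa using this

/-- Let `X = (⊕ X_k)_{ℓ₁}`, `n ∈ ℕ`, `g = x_n* ∈ S_{X_n*}`, `α > 0`, and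
consider the slice `S` of `B_X` given by the functional `(x_k) ↦ x_n*(x_n)`. Then any two
elements `(x_k), (y_k) ∈ S` satisfy `‖(x_k) - (y_k)‖ ≤ diam S(B_{X_n}, x_n*, α) + 2α`;
in particular `diam S ≤ diam S(B_{X_n}, x_n*, α) + 2α`. -/
theorem ell1_sum_slice_diam_estimate
    (X : ℕ → Type*) [∀ k, NormedAddCommGroup (X k)] [∀ k, NormedSpace ℝ (X k)]
    [∀ k, CompleteSpace (X k)]
    (n : ℕ) (g : StrongDual ℝ (X n)) (hg : ‖g‖ = 1) (α : ℝ) (hα : 0 < α) :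
    (∀ x y : lp X 1, ‖x‖ ≤ 1 → ‖y‖ ≤ 1 → g (x n) > 1 - α → g (y n) > 1 - α →
      ‖x - y‖ ≤ Metric.diam {z : X n | ‖z‖ ≤ 1 ∧ g z > 1 - α} + 2 * α) ∧
    Metric.diam {x : lp X 1 | ‖x‖ ≤ 1 ∧ g (x n) > 1 - α} ≤
      Metric.diam {z : X n | ‖z‖ ≤ 1 ∧ g z > 1 - α} + 2 * α := by
  set S : Set (X n) := {z : X n | ‖z‖ ≤ 1 ∧ g z > 1 - α} with hS
  have hSb : Bornology.IsBounded S := by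
    apply (Metric.isBounded_closedBall (x := (0 : X n)) (r := 1)).subset
    intro z hz
    simpa [Metric.mem_closedBall, dist_zero_right] using hz.1
  -- residual bound
  have rest_le : ∀ x : lp X 1, ‖x‖ ≤ 1 → g (x n) > 1 - α →
      (∑' k, if k = n then 0 else ‖x k‖) ≤ α := by
    intro x hx hgx
    have hsum := lp_one_summable x
    have hsplit := Summable.tsum_eq_add_tsum_ite hsum n
    have hxn : 1 - α < ‖x n‖ := by
      calc 1 - α < g (x n) := hgx
        _ ≤ ‖g (x n)‖ := le_abs_self _
        _ ≤ ‖g‖ * ‖x n‖ := g.le_opNorm _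
        _ = ‖x n‖ := by rw [hg, one_mul]
    have : ‖x n‖ + (∑' k, if k = n then 0 else ‖x k‖) ≤ 1 := by
      rw [← hsplit, ← lp_one_norm_eq]; exact hx
    linarith
  have key : ∀ x y : lp X 1, ‖x‖ ≤ 1 → ‖y‖ ≤ 1 → g (x n) > 1 - α → g (y n) > 1 - α →
      ‖x - y‖ ≤ Metric.diam S + 2 * α := by
    intro x y hx hy hgx hgy
    have hsx := lp_one_summable x
    have hsy := lp_one_summable y
    have hsxy := lp_one_summable (x - y)
    have hcoe : ∀ k, (x - y : lp X 1) k = x k - y k := fun k => rfl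
    have hnorm : ‖x - y‖ = ‖x n - y n‖ + ∑' k, if k = n then 0 else ‖x k - y k‖ := by
      rw [lp_one_norm_eq (x - y), Summable.tsum_eq_add_tsum_ite hsxy n]
      simp only [hcoe]
    have htail : (∑' k, if k = n then 0 else ‖x k - y k‖) ≤ 2 * α := by
      have hsum2 : Summable fun k => if k = n then 0 else (‖x k‖ + ‖y k‖) := by
        apply Summable.of_nonneg_of_le (fun k => by positivity)
          (fun k => ?_) (hsx.add hsy)
        by_cases h : k = n <;> simp [h] <;> positivity
      have h1 : (∑' k, if k = n then 0 else ‖x k - y k‖) ≤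
          ∑' k, if k = n then 0 else (‖x k‖ + ‖y k‖) := by
        apply Summable.tsum_le_tsum _ _ hsum2
        · intro k
          by_cases h : k = n
          · simp [h]
          · simp only [h, if_false]
            exact norm_sub_le _ _
        · apply Summable.of_nonneg_of_le (fun k => by positivity) (fun k => ?_)
            ((hsx.add hsy))
          by_cases h : k = n
          · simp [h]; positivity
          · simp only [h, if_false]; exact norm_sub_le _ _ |>.trans le_rfl
      have h2 : (∑' k, if k = n then 0 else (‖x k‖ + ‖y k‖)) =
          (∑' k, if k = n then 0 else ‖x k‖) + ∑' k, if k = n then 0 else ‖y k‖ := by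
        rw [← Summable.tsum_add]
        · congr 1; ext k; by_cases h : k = n <;> simp [h]
        · exact Summable.of_nonneg_of_le (fun k => by positivity)
            (fun k => by by_cases h : k = n <;> simp [h]) hsx
        · exact Summable.of_nonneg_of_le (fun k => by positivity)
            (fun k => by by_cases h : k = n <;> simp [h]) hsy
      have := rest_le x hx hgx
      have := rest_le y hy hgy
      linarith
    have hhead : ‖x n - y n‖ ≤ Metric.diam S := by
      have hxS : x n ∈ S := ⟨(lp.norm_apply_le_norm one_ne_zero x n).trans hx, hgx⟩
      have hyS : y n ∈ S := ⟨(lp.norm_apply_le_norm one_ne_zero y n).trans hy, hgy⟩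
      simpa [dist_eq_norm] using Metric.dist_le_diam_of_mem hSb hxS hyS
    linarith
  refine ⟨key, ?_⟩
  apply Metric.diam_le_of_forall_dist_le (by positivity)
  intro x hx y hy
  rw [dist_eq_norm]
  exact key x y hx.1 hy.1 hx.2 hy.2
end

section
/- Let X be a Banach space, x_0 ∈ S_X, f ∈ S_{X*} with f(x_0) = 1, δ > 0, and B_δ := closed convex hull of B_X ∪ {(1+δ)x_0} ∪ {-(1+δ)x_0}. Then for every 0 < r < δ, the set {z ∈ B_δ : f(z) > 1 + δ - r} has diameter at most 3r(1+δ)/δ. -/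
open NormedSpace Metric

/-- `B_δ`: the closed convex hull of `B_X ∪ {(1+δ)x₀} ∪ {-(1+δ)x₀}`. -/
noncomputable def Bdelta {X : Type*} [NormedAddCommGroup X] [NormedSpace ℝ X]
    (x₀ : X) (δ : ℝ) : Set X :=
  closure (convexHull ℝ (Metric.closedBall (0 : X) 1 ∪ {(1 + δ) • x₀, -((1 + δ) • x₀)}))

set_option maxHeartbeats 1000000 in
/-- Decomposition of points of the convex hull of `B_X ∪ {p, -p}`. -/
private lemma hull_decomp {X : Type*} [NormedAddCommGroup X] [NormedSpace ℝ X]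
    (p : X) {z : X}
    (hz : z ∈ convexHull ℝ (Metric.closedBall (0 : X) 1 ∪ {p, -p})) :
    ∃ (a c : ℝ) (x : X), 0 ≤ a ∧ 0 ≤ c ∧ a + c ≤ 1 ∧ ‖x‖ ≤ 1 ∧
      z = a • x + (1 - a - 2*c) • p := by
  have hmin : convexHull ℝ (Metric.closedBall (0 : X) 1 ∪ {p, -p}) ⊆
      {z : X | ∃ (a c : ℝ) (x : X), 0 ≤ a ∧ 0 ≤ c ∧ a + c ≤ 1 ∧ ‖x‖ ≤ 1 ∧
        z = a • x + (1 - a - 2*c) • p} := by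
    apply convexHull_min
    · rintro y (hy | hy)
      · refine ⟨1, 0, y, by norm_num, le_refl 0, by norm_num,
          by simpa using mem_closedBall_zero_iff.mp hy, by norm_num⟩
      · simp only [Set.mem_insert_iff, Set.mem_singleton_iff] at hy
        rcases hy with rfl | rfl
        · exact ⟨0, 0, 0, le_refl 0, le_refl 0, by norm_num, by simp, by module⟩
        · exact ⟨0, 1, 0, le_refl 0, zero_le_one, by norm_num, by simp, by module⟩
    · rintro z ⟨a, c, x, ha, hc, hac, hx, rfl⟩ w ⟨a', c', x', ha', hc', hac', hx', rfl⟩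
        θ θ' hθ hθ' hθθ
      have hsum1 : θ * (a + c) ≤ θ * 1 := mul_le_mul_of_nonneg_left hac hθ
      have hsum2 : θ' * (a' + c') ≤ θ' * 1 := mul_le_mul_of_nonneg_left hac' hθ'
      by_cases h0 : θ*a + θ'*a' = 0
      · have h1 : θ*a = 0 := by nlinarith [mul_nonneg hθ ha, mul_nonneg hθ' ha']
        have h2 : θ'*a' = 0 := by nlinarith [mul_nonneg hθ ha, mul_nonneg hθ' ha']
        refine ⟨0, θ*c + θ'*c', 0, le_refl 0, by positivity, by nlinarith, by simp, ?_⟩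
        match_scalars <;> linarith [h1, h2, hθθ]
      · refine ⟨θ*a + θ'*a', θ*c + θ'*c',
          ((θ*a)/(θ*a + θ'*a')) • x + ((θ'*a')/(θ*a + θ'*a')) • x',
          by positivity, by positivity, by nlinarith, ?_, ?_⟩
        · have hApos : 0 < θ*a + θ'*a' :=
            lt_of_le_of_ne (by positivity) (Ne.symm h0)
          calc ‖((θ*a)/(θ*a + θ'*a')) • x + ((θ'*a')/(θ*a + θ'*a')) • x'‖
              ≤ ‖((θ*a)/(θ*a + θ'*a')) • x‖ + ‖((θ'*a')/(θ*a + θ'*a')) • x'‖ :=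
                norm_add_le _ _
            _ = (θ*a)/(θ*a + θ'*a') * ‖x‖ + (θ'*a')/(θ*a + θ'*a') * ‖x'‖ := by
                rw [norm_smul, norm_smul, Real.norm_eq_abs, Real.norm_eq_abs,
                  abs_of_nonneg (by positivity), abs_of_nonneg (by positivity)]
            _ ≤ (θ*a)/(θ*a + θ'*a') * 1 + (θ'*a')/(θ*a + θ'*a') * 1 := by
                gcongr <;> positivity
            _ = 1 := by field_simp
        · have e1 : (θ*a + θ'*a') * ((θ*a)/(θ*a + θ'*a')) = θ*a := by field_simp
          have e2 : (θ*a + θ'*a') * ((θ'*a')/(θ*a + θ'*a')) = θ'*a' := by field_simp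
          have hxx : (θ*a + θ'*a') • (((θ*a)/(θ*a + θ'*a')) • x
              + ((θ'*a')/(θ*a + θ'*a')) • x') = (θ*a) • x + (θ'*a') • x' := by
            rw [smul_add, smul_smul, smul_smul, e1, e2]
          rw [hxx]
          match_scalars <;> ring_nf <;> linarith [hθθ]
  exact hmin hz

set_option maxHeartbeats 1000000 in
/-- With `x₀ ∈ S_X`, `f ∈ S_{X*}`, `f(x₀) = 1`, `δ > 0` and
`B_δ = co(B_X ∪ {±(1+δ)x₀})`: for every `0 < r < δ`, the set
`{z ∈ B_δ : f(z) > 1 + δ - r}` has diameter at most `3r(1+δ)/δ`. -/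
theorem diam_slice_of_Bdelta
    (X : Type*) [NormedAddCommGroup X] [NormedSpace ℝ X] [CompleteSpace X]
    (x₀ : X) (hx₀ : ‖x₀‖ = 1) (f : StrongDual ℝ X) (hf : ‖f‖ = 1) (hfx₀ : f x₀ = 1)
    (δ : ℝ) (hδ : 0 < δ) (r : ℝ) (hr : 0 < r) (hrδ : r < δ) :
    Metric.diam {z ∈ Bdelta x₀ δ | f z > 1 + δ - r} ≤ 3 * r * (1 + δ) / δ := by
  set p : X := (1 + δ) • x₀ with hp_def
  have hδ1 : (0:ℝ) < 1 + δ := by linarith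
  have hp : ‖p‖ = 1 + δ := by
    rw [hp_def, norm_smul, Real.norm_eq_abs, abs_of_pos hδ1, hx₀, mul_one]
  have hfp : f p = 1 + δ := by
    rw [hp_def, map_smul, hfx₀]; simp
  set H : Set X := convexHull ℝ (Metric.closedBall (0 : X) 1 ∪ {p, -p}) with hH
  set A : Set X := {z ∈ H | 1 + δ - r ≤ f z} with hA
  -- the hull sits inside the ball of radius 1+δ
  have hHball : H ⊆ Metric.closedBall (0 : X) (1 + δ) := by
    apply convexHull_min _ (convex_closedBall _ _)
    rintro y (hy | hy)
    · exact Metric.closedBall_subset_closedBall (by linarith) hy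
    · simp only [Set.mem_insert_iff, Set.mem_singleton_iff] at hy
      rcases hy with rfl | rfl
      · rw [mem_closedBall_zero_iff, hp]
      · rw [mem_closedBall_zero_iff, norm_neg, hp]
  -- key pairwise estimate on A
  have key : ∀ z ∈ A, ∀ w ∈ A, dist z w ≤ 3 * r * (1 + δ) / δ := by
    rintro z ⟨hzH, hzf⟩ w ⟨hwH, hwf⟩
    obtain ⟨a, c, x, ha, hc, hac, hx, hzeq⟩ := hull_decomp p hzH
    obtain ⟨a', c', x', ha', hc', hac', hx', hweq⟩ := hull_decomp p hwH
    -- bound on f x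
    have hfx1 : f x ≤ 1 := by
      have h1 : ‖f x‖ ≤ ‖f‖ * ‖x‖ := f.le_opNorm x
      rw [hf, one_mul, Real.norm_eq_abs] at h1
      calc f x ≤ |f x| := le_abs_self _
        _ ≤ ‖x‖ := h1
        _ ≤ 1 := hx
    have hfx1' : f x' ≤ 1 := by
      have h1 : ‖f x'‖ ≤ ‖f‖ * ‖x'‖ := f.le_opNorm x'
      rw [hf, one_mul, Real.norm_eq_abs] at h1
      calc f x' ≤ |f x'| := le_abs_self _
        _ ≤ ‖x'‖ := h1
        _ ≤ 1 := hx'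
    have hfz : f z = a * f x + (1 - a - 2*c) * (1 + δ) := by
      rw [hzeq]; simp [hfp]
    have hfw : f w = a' * f x' + (1 - a' - 2*c') * (1 + δ) := by
      rw [hweq]; simp [hfp]
    have key1 : a*δ + 2*c*(1+δ) ≤ r := by
      nlinarith [mul_le_of_le_one_right ha hfx1]
    have key1' : a'*δ + 2*c'*(1+δ) ≤ r := by
      nlinarith [mul_le_of_le_one_right ha' hfx1']
    have haδ : a * δ ≤ r := by nlinarith
    have haδ' : a' * δ ≤ r := by nlinarith
    -- the norm estimate
    have hzw : z - w = a • x + (-a') • x' + ((a' + 2*c') - (a + 2*c)) • p := by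
      rw [hzeq, hweq]; module
    have hnorm : ‖z - w‖ ≤ a + a' + |(a' + 2*c') - (a + 2*c)| * (1 + δ) := by
      rw [hzw]
      calc ‖a • x + (-a') • x' + ((a' + 2*c') - (a + 2*c)) • p‖
          ≤ ‖a • x + (-a') • x'‖ + ‖((a' + 2*c') - (a + 2*c)) • p‖ := norm_add_le _ _
        _ ≤ ‖a • x‖ + ‖(-a') • x'‖ + ‖((a' + 2*c') - (a + 2*c)) • p‖ := by
            gcongr; exact norm_add_le _ _
        _ ≤ a + a' + |(a' + 2*c') - (a + 2*c)| * (1 + δ) := by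
            rw [norm_smul, norm_smul, norm_smul, hp, Real.norm_eq_abs, Real.norm_eq_abs,
              Real.norm_eq_abs, abs_of_nonneg ha, abs_neg, abs_of_nonneg ha']
            have h1 : a * ‖x‖ ≤ a * 1 := mul_le_mul_of_nonneg_left hx ha
            have h2 : a' * ‖x'‖ ≤ a' * 1 := mul_le_mul_of_nonneg_left hx' ha'
            linarith
    rw [dist_eq_norm]
    refine hnorm.trans ?_
    rw [le_div_iff₀ hδ]
    rcases le_total (a + 2*c) (a' + 2*c') with hmax | hmax
    · have hb : |(a' + 2*c') - (a + 2*c)| ≤ a' + 2*c' := by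
        rw [abs_of_nonneg (by linarith)]; linarith
      have h3 : (a' + 2*c') * (1 + δ) ≤ a' + r := by nlinarith
      nlinarith [mul_le_mul_of_nonneg_right
          (mul_le_mul_of_nonneg_right hb hδ1.le) hδ.le,
        mul_le_mul_of_nonneg_right h3 hδ.le,
        mul_nonneg hr.le hδ.le]
    · have hb : |(a' + 2*c') - (a + 2*c)| ≤ a + 2*c := by
        rw [abs_of_nonpos (by linarith), neg_sub]; linarith
      have h3 : (a + 2*c) * (1 + δ) ≤ a + r := by nlinarith
      nlinarith [mul_le_mul_of_nonneg_right
          (mul_le_mul_of_nonneg_right hb hδ1.le) hδ.le,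
        mul_le_mul_of_nonneg_right h3 hδ.le,
        mul_nonneg hr.le hδ.le]
  have hdA : Metric.diam A ≤ 3 * r * (1 + δ) / δ :=
    Metric.diam_le_of_forall_dist_le (by positivity) key
  -- boundedness of closure A
  have hAball : closure A ⊆ Metric.closedBall (0 : X) (1 + δ) :=
    closure_minimal (fun z hz => hHball hz.1) Metric.isClosed_closedBall
  have hbdd : Bornology.IsBounded (closure A) :=
    (Metric.isBounded_closedBall).subset hAball
  -- the slice is contained in the closure of A
  have hsub : {z | z ∈ Bdelta x₀ δ ∧ f z > 1 + δ - r} ⊆ closure A := by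
    intro z hz
    have hzB : z ∈ closure H := hz.1
    have hopen : IsOpen {y : X | 1 + δ - r < f y} :=
      isOpen_lt continuous_const f.continuous
    have hmem : z ∈ {y : X | 1 + δ - r < f y} ∩ closure H := ⟨hz.2, hzB⟩
    have := hopen.inter_closure hmem
    refine closure_mono ?_ this
    rintro y ⟨hy1, hy2⟩
    exact ⟨hy2, le_of_lt hy1⟩
  calc Metric.diam {z | z ∈ Bdelta x₀ δ ∧ f z > 1 + δ - r}
      ≤ Metric.diam (closure A) := Metric.diam_mono hsub hbdd
    _ = Metric.diam A := Metric.diam_closure A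
    _ ≤ 3 * r * (1 + δ) / δ := hdA
end

section
/- Let X be a Banach space, x_0 ∈ S_X, f ∈ S_{X*} with f(x_0) = 1, δ, ε > 0, B_δ := closed convex hull of B_X ∪ {±(1+δ)x_0}, and C_ε := B_X + εB_δ with associated Minkowski norm |·|_ε. Then for every 0 < r < min{ε, δ}, the slice {z ∈ C_ε : f(z) > 1 + ε(1+δ) - r} is contained in the |·|_ε-ball of center ε(1+δ)x_0 and radius 1/(1+ε) + 3r(1+δ)/δ. -/
open NormedSpace Metric
open scoped Pointwise

/-- Key estimate: for every `y ∈ B_δ`, `‖y - (1+δ)x₀‖ ≤ (2+δ)/δ · (1+δ - f y)`. -/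
theorem norm_sub_le_of_mem_Bdelta
    {X : Type*} [NormedAddCommGroup X] [NormedSpace ℝ X]
    {x₀ : X} (hx₀ : ‖x₀‖ = 1) {f : StrongDual ℝ X} (hf : ‖f‖ = 1) (hfx₀ : f x₀ = 1)
    {δ : ℝ} (hδ : 0 < δ) {y : X} (hy : y ∈ Bdelta x₀ δ) :
    ‖y - (1 + δ) • x₀‖ ≤ (2 + δ) / δ * (1 + δ - f y) := by
  obtain ⟨p, hp⟩ : ∃ p : X, p = (1 + δ) • x₀ := ⟨_, rfl⟩
  obtain ⟨c, hc⟩ : ∃ c : ℝ, c = (2 + δ) / δ := ⟨_, rfl⟩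
  have hc1 : (1 : ℝ) ≤ c := by rw [hc, le_div_iff₀ hδ]; linarith
  have hcδ : c * δ = 2 + δ := by rw [hc]; field_simp
  -- the target set
  have hfabs : ∀ u : X, ‖u‖ ≤ 1 → |f u| ≤ 1 := by
    intro u hu
    calc |f u| = ‖f u‖ := rfl
      _ ≤ ‖f‖ * ‖u‖ := f.le_opNorm u
      _ ≤ 1 := by rw [hf]; linarith
  set S : Set X := {y : X | ‖y - p‖ + c * f y ≤ c * (1 + δ)} with hS
  have hconv : Convex ℝ S := by
    intro u hu v hv a b ha hb hab
    simp only [hS, Set.mem_setOf_eq] at hu hv ⊢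
    have h1 : a • u + b • v - p = a • (u - p) + b • (v - p) := by
      have hpp : a • p + b • p = p := by rw [← add_smul, hab, one_smul]
      rw [smul_sub, smul_sub, sub_eq_iff_eq_add]
      calc a • u + b • v = a • u - a • p + (b • v - b • p) + (a • p + b • p) := by abel
        _ = a • u - a • p + (b • v - b • p) + p := by rw [hpp]
    have h2 : ‖a • u + b • v - p‖ ≤ a * ‖u - p‖ + b * ‖v - p‖ := by
      rw [h1]
      calc ‖a • (u - p) + b • (v - p)‖ ≤ ‖a • (u - p)‖ + ‖b • (v - p)‖ := norm_add_le _ _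
        _ = a * ‖u - p‖ + b * ‖v - p‖ := by
            rw [norm_smul, norm_smul, Real.norm_eq_abs, Real.norm_eq_abs,
              abs_of_nonneg ha, abs_of_nonneg hb]
    have h3 : f (a • u + b • v) = a * f u + b * f v := by
      simp [map_add, map_smul]
    have hcomb := add_le_add (mul_le_mul_of_nonneg_left hu ha) (mul_le_mul_of_nonneg_left hv hb)
    have hrhs : a * (c * (1 + δ)) + b * (c * (1 + δ)) = c * (1 + δ) := by
      rw [← add_mul, hab, one_mul]
    rw [h3]
    nlinarith [h2, hcomb, hrhs]
  have hclosed : IsClosed S := by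
    have : Continuous fun y : X => ‖y - p‖ + c * f y :=
      ((continuous_id.sub continuous_const).norm).add (f.continuous.const_smul c)
    exact isClosed_le this continuous_const
  have hgen : Metric.closedBall (0 : X) 1 ∪ {(1 + δ) • x₀, -((1 + δ) • x₀)} ⊆ S := by
    have hnp : ‖p‖ = 1 + δ := by
      rw [hp, norm_smul, Real.norm_eq_abs, abs_of_pos (by linarith), hx₀, mul_one]
    rintro y (hy | hy | hy)
    · -- y in the unit ball
      rw [Metric.mem_closedBall, dist_zero_right] at hy
      show ‖y - p‖ + c * f y ≤ c * (1 + δ)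
      have h1 : ‖y - p‖ ≤ 2 + δ := by
        calc ‖y - p‖ ≤ ‖y‖ + ‖p‖ := norm_sub_le _ _
          _ ≤ 1 + (1 + δ) := by rw [hnp]; linarith
          _ = 2 + δ := by ring
      have h2 := abs_le.mp (hfabs y hy)
      nlinarith [h2.1, h2.2]
    · subst hy
      show ‖(1 + δ) • x₀ - p‖ + c * f ((1 + δ) • x₀) ≤ c * (1 + δ)
      have hfp : f ((1 + δ) • x₀) = 1 + δ := by rw [map_smul, hfx₀, smul_eq_mul, mul_one]
      rw [hfp, hp, sub_self, norm_zero, zero_add]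
    · rw [Set.mem_singleton_iff] at hy
      subst hy
      show ‖-((1 + δ) • x₀) - p‖ + c * f (-((1 + δ) • x₀)) ≤ c * (1 + δ)
      have hfval : f (-((1 + δ) • x₀)) = -(1 + δ) := by
        rw [map_neg, map_smul, hfx₀, smul_eq_mul, mul_one]
      have hnn : ‖-((1 + δ) • x₀) - p‖ = 2 * (1 + δ) := by
        have h : -((1 + δ) • x₀) - p = -((2 * (1 + δ)) • x₀) := by
          have h2 : (2 * (1 + δ) : ℝ) • x₀ = (1 + δ) • x₀ + (1 + δ) • x₀ := by
            rw [← add_smul]; ring_nf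
          rw [hp, h2]; abel
        rw [h, norm_neg, norm_smul, Real.norm_eq_abs, abs_of_pos (by linarith), hx₀, mul_one]
      rw [hfval, hnn]
      nlinarith
  have hsub : Bdelta x₀ δ ⊆ S :=
    closure_minimal (convexHull_min hgen hconv) hclosed
  have hyS : ‖y - p‖ + c * f y ≤ c * (1 + δ) := hsub hy
  rw [← hp, ← hc]
  linarith

/-- `C_ε := B_X + ε B_δ`. -/
noncomputable def Ceps {X : Type*} [NormedAddCommGroup X] [NormedSpace ℝ X]
    (x₀ : X) (δ ε : ℝ) : Set X :=
  Metric.closedBall (0 : X) 1 + ε • Bdelta x₀ δ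

/-- With `x₀ ∈ S_X`, `f ∈ S_{X*}`, `f(x₀) = 1`, `δ, ε > 0`,
`B_δ = co(B_X ∪ {±(1+δ)x₀})`, `C_ε = B_X + εB_δ` and `|·|_ε = gauge C_ε`:
for every `0 < r < min {ε, δ}`, the slice `{z ∈ C_ε : f z > 1 + ε(1+δ) - r}` is contained
in the `|·|_ε`-ball of center `ε(1+δ)x₀` and radius `1/(1+ε) + 3r(1+δ)/δ`. -/
theorem slice_of_Ceps_in_small_ball
    (X : Type*) [NormedAddCommGroup X] [NormedSpace ℝ X] [CompleteSpace X]
    (x₀ : X) (hx₀ : ‖x₀‖ = 1) (f : StrongDual ℝ X) (hf : ‖f‖ = 1) (hfx₀ : f x₀ = 1)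
    (δ ε : ℝ) (hδ : 0 < δ) (hε : 0 < ε)
    (r : ℝ) (hr : 0 < r) (hrε : r < ε) (hrδ : r < δ) :
    {z ∈ Ceps x₀ δ ε | f z > 1 + ε * (1 + δ) - r} ⊆
      {z : X | gauge (Ceps x₀ δ ε) (z - (ε * (1 + δ)) • x₀) ≤
        1 / (1 + ε) + 3 * r * (1 + δ) / δ} := by
  -- basic facts about B_δ and C_ε
  have hBconv : Convex ℝ (Bdelta x₀ δ) := (convex_convexHull ℝ _).closure
  have hBball : Metric.closedBall (0 : X) 1 ⊆ Bdelta x₀ δ := fun u hu =>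
    subset_closure (subset_convexHull ℝ _ (Or.inl hu))
  have hB0 : (0 : X) ∈ Bdelta x₀ δ := hBball (by simp)
  have hCconv : Convex ℝ (Ceps x₀ δ ε) :=
    (convex_closedBall _ _).add (hBconv.smul ε)
  have hballC : Metric.closedBall (0 : X) 1 ⊆ Ceps x₀ δ ε := by
    intro x hx
    exact ⟨x, hx, 0, ⟨0, hB0, smul_zero ε⟩, add_zero x⟩
  have habs : Absorbent ℝ (Ceps x₀ δ ε) :=
    (absorbent_ball_zero one_pos).mono (Metric.ball_subset_closedBall.trans hballC)
  -- take z in the slice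
  rintro z ⟨hzC, hzf⟩
  obtain ⟨x, hx, w, hw, hzw⟩ := hzC
  obtain ⟨y, hy, rfl⟩ := hw
  rw [Metric.mem_closedBall, dist_zero_right] at hx
  -- decompose
  have hdec : z - (ε * (1 + δ)) • x₀ = x + ε • (y - (1 + δ) • x₀) := by
    rw [← hzw, smul_sub, smul_smul]
    show x + ε • y - _ = _
    abel
  -- f y is big
  have hfx : f x ≤ 1 := by
    calc f x ≤ |f x| := le_abs_self _
      _ = ‖f x‖ := rfl
      _ ≤ ‖f‖ * ‖x‖ := f.le_opNorm x
      _ ≤ 1 := by rw [hf]; linarith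
  have hfy : 1 + δ - f y < r / ε := by
    have hz : f z = f x + ε * f y := by rw [← hzw]; simp [map_add, map_smul]
    rw [hz] at hzf
    rw [lt_div_iff₀ hε]
    nlinarith
  -- the key estimate
  have hkey : ‖y - (1 + δ) • x₀‖ ≤ (2 + δ) / δ * (1 + δ - f y) :=
    norm_sub_le_of_mem_Bdelta hx₀ hf hfx₀ hδ hy
  -- gauge of x
  have hgx : gauge (Ceps x₀ δ ε) x ≤ 1 / (1 + ε) := by
    apply gauge_le_of_mem (by positivity)
    refine ⟨(1 + ε) • x, ?_, by
      show (1 / (1 + ε)) • ((1 + ε) • x) = x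
      rw [smul_smul, one_div, inv_mul_cancel₀ (by positivity), one_smul]⟩
    exact ⟨x, by rwa [Metric.mem_closedBall, dist_zero_right], ε • x,
      ⟨x, hBball (by rwa [Metric.mem_closedBall, dist_zero_right]), rfl⟩, by
        rw [add_smul, one_smul]⟩
  -- gauge of the second term
  have hgy : gauge (Ceps x₀ δ ε) (ε • (y - (1 + δ) • x₀)) ≤ ε * ‖y - (1 + δ) • x₀‖ := by
    have h := mul_gauge_le_norm (s := Ceps x₀ δ ε) (r := 1) (x := ε • (y - (1 + δ) • x₀))
      (Metric.ball_subset_closedBall.trans hballC)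
    rw [one_mul] at h
    calc gauge (Ceps x₀ δ ε) (ε • (y - (1 + δ) • x₀)) ≤ ‖ε • (y - (1 + δ) • x₀)‖ := h
      _ = ε * ‖y - (1 + δ) • x₀‖ := by
          rw [norm_smul, Real.norm_eq_abs, abs_of_pos hε]
  -- wrap up
  have h2 : ε * ‖y - (1 + δ) • x₀‖ ≤ 3 * r * (1 + δ) / δ := by
    have h3 : ε * ‖y - (1 + δ) • x₀‖ ≤ ε * ((2 + δ) / δ * (r / ε)) := by
      apply mul_le_mul_of_nonneg_left _ hε.le
      exact hkey.trans (mul_le_mul_of_nonneg_left hfy.le (by positivity))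
    have h5 : ε * ((2 + δ) / δ * (r / ε)) = (2 + δ) * r / δ := by
      field_simp
    have h6 : (2 + δ) * r / δ ≤ 3 * r * (1 + δ) / δ := by
      rw [div_le_div_iff_of_pos_right hδ]
      nlinarith
    linarith [h5 ▸ h3]
  rw [Set.mem_setOf_eq, hdec]
  calc gauge (Ceps x₀ δ ε) (x + ε • (y - (1 + δ) • x₀))
      ≤ gauge (Ceps x₀ δ ε) x + gauge (Ceps x₀ δ ε) (ε • (y - (1 + δ) • x₀)) :=
        gauge_add_le hCconv habs _ _
    _ ≤ 1 / (1 + ε) + 3 * r * (1 + δ) / δ := add_le_add hgx (hgy.trans h2)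
end

section
/- In the renorming construction: for sufficiently small r > 0, the slice {z ∈ C_ε : f(z) > 1 + ε(1+δ) - r} of the unit ball of (X, |·|_ε) has |·|_ε-diameter at most 2/(1+ε) + 6r(1+δ)/δ. In particular, for r small enough, (X, |·|_ε) has slices of diameter strictly smaller than 2 and fails the r-big slice property. -/
open NormedSpace Metric
open scoped Pointwise

section Aux

variable {X : Type*} [NormedAddCommGroup X] [NormedSpace ℝ X] {x₀ : X} {δ ε : ℝ}

lemma negS_eq :
    -(Metric.closedBall (0 : X) 1 ∪ {(1 + δ) • x₀, -((1 + δ) • x₀)})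
      = Metric.closedBall (0 : X) 1 ∪ {(1 + δ) • x₀, -((1 + δ) • x₀)} := by
  ext x
  simp only [Set.mem_neg, Set.mem_union, mem_closedBall, dist_zero_right, norm_neg,
    Set.mem_insert_iff, Set.mem_singleton_iff]
  constructor
  · rintro (h | h | h)
    · exact Or.inl h
    · exact Or.inr (Or.inr (neg_eq_iff_eq_neg.mp h))
    · exact Or.inr (Or.inl (neg_inj.mp h))
  · rintro (h | h | h)
    · exact Or.inl h
    · exact Or.inr (Or.inr (by rw [h]))
    · exact Or.inr (Or.inl (by rw [h, neg_neg]))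

lemma Bdelta_neg_mem {v : X} (h : v ∈ Bdelta x₀ δ) : -v ∈ Bdelta x₀ δ := by
  refine map_mem_closure continuous_neg h ?_
  intro a ha
  rw [← negS_eq, convexHull_neg]
  simpa using ha

lemma closedBall_subset_Bdelta : Metric.closedBall (0 : X) 1 ⊆ Bdelta x₀ δ :=
  Set.subset_union_left.trans ((subset_convexHull ℝ _).trans subset_closure)

lemma convex_Bdelta : Convex ℝ (Bdelta x₀ δ) := (convex_convexHull ℝ _).closure

lemma convex_Ceps : Convex ℝ (Ceps x₀ δ ε) :=
  (convex_closedBall _ _).add (convex_Bdelta.smul ε)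

lemma Ceps_neg_mem (hz : (0:ℝ) ≤ ε) {z : X} (h : z ∈ Ceps x₀ δ ε) : -z ∈ Ceps x₀ δ ε := by
  obtain ⟨u, hu, w, hw, rfl⟩ := Set.mem_add.1 h
  obtain ⟨v, hv, rfl⟩ := Set.mem_smul_set.1 hw
  refine Set.mem_add.2 ⟨-u, ?_, ε • (-v), Set.smul_mem_smul_set (Bdelta_neg_mem hv), by
    rw [smul_neg]; abel⟩
  simpa using hu

lemma closedBall_subset_Ceps (hε : 0 < ε) :
    Metric.closedBall (0 : X) (1 + ε) ⊆ Ceps x₀ δ ε := by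
  intro x hx
  have h1ε : (0:ℝ) < 1 + ε := by linarith
  rw [mem_closedBall, dist_zero_right] at hx
  have hx' : ‖(1 + ε)⁻¹ • x‖ ≤ 1 := by
    rw [norm_smul, Real.norm_eq_abs, abs_of_pos (inv_pos.2 h1ε)]
    rw [inv_mul_le_iff₀ h1ε]
    linarith
  have hmem : (1 + ε)⁻¹ • x ∈ Metric.closedBall (0:X) 1 := by
    rwa [mem_closedBall, dist_zero_right]
  refine Set.mem_add.2 ⟨(1 + ε)⁻¹ • x, hmem, ε • ((1 + ε)⁻¹ • x),
    Set.smul_mem_smul_set (closedBall_subset_Bdelta hmem), ?_⟩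
  rw [smul_smul, ← add_smul]
  have : (1 + ε)⁻¹ + ε * (1 + ε)⁻¹ = 1 := by field_simp
  rw [this, one_smul]

lemma absorbent_Ceps (hε : 0 < ε) : Absorbent ℝ (Ceps x₀ δ ε) :=
  absorbent_nhds_zero <| Filter.mem_of_superset
    (Metric.closedBall_mem_nhds _ (by linarith : (0:ℝ) < 1 + ε))
    (closedBall_subset_Ceps hε)

lemma gauge_Ceps_le (hε : 0 < ε) (x : X) :
    gauge (Ceps x₀ δ ε) x ≤ ‖x‖ / (1 + ε) := by
  have h1ε : (0:ℝ) < 1 + ε := by linarith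
  have := gauge_mono (absorbent_ball_zero h1ε)
      (ball_subset_closedBall.trans (closedBall_subset_Ceps (x₀ := x₀) (δ := δ) hε)) x
  rwa [gauge_ball h1ε.le] at this

/-- The key convexity estimate on `B_δ`. -/
lemma Bdelta_key (hδ : 0 < δ) (hx₀ : ‖x₀‖ = 1) (f : StrongDual ℝ X) (hf : ‖f‖ = 1)
    (hfx₀ : f x₀ = 1) {v : X} (hv : v ∈ Bdelta x₀ δ) :
    ‖v - (1 + δ) • x₀‖ ≤ (2 * (1 + δ) / δ) * ((1 + δ) - f v) := by
  set K : ℝ := 2 * (1 + δ) / δ with hK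
  have hKpos : 0 < K := by positivity
  set T : Set X := {v | ‖v - (1 + δ) • x₀‖ ≤ K * ((1 + δ) - f v)} with hT
  have hclosed : IsClosed T := by
    have hc1 : Continuous fun v : X => ‖v - (1 + δ) • x₀‖ :=
      (continuous_id.sub continuous_const).norm
    have hc2 : Continuous fun v : X => K * ((1 + δ) - f v) :=
      continuous_const.mul (continuous_const.sub f.continuous)
    exact isClosed_le hc1 hc2
  have hconv : Convex ℝ T := by
    intro x hx y hy a b ha hb hab
    simp only [hT, Set.mem_setOf_eq] at hx hy ⊢
    have h1 : a • ((1 + δ) • x₀) + b • ((1 + δ) • x₀) = (1 + δ) • x₀ := by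
      rw [← add_smul, hab, one_smul]
    have hxy : a • x + b • y - (1 + δ) • x₀ = a • (x - (1 + δ) • x₀) + b • (y - (1 + δ) • x₀) := by
      have h2 : a • (x - (1 + δ) • x₀) + b • (y - (1 + δ) • x₀)
          = a • x + b • y - (a • ((1 + δ) • x₀) + b • ((1 + δ) • x₀)) := by
        rw [smul_sub, smul_sub]; abel
      rw [h2, h1]
    calc ‖a • x + b • y - (1 + δ) • x₀‖
        ≤ a * ‖x - (1 + δ) • x₀‖ + b * ‖y - (1 + δ) • x₀‖ := by
          rw [hxy]
          refine (norm_add_le _ _).trans ?_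
          rw [norm_smul, norm_smul, Real.norm_eq_abs, Real.norm_eq_abs,
            abs_of_nonneg ha, abs_of_nonneg hb]
      _ ≤ a * (K * ((1 + δ) - f x)) + b * (K * ((1 + δ) - f y)) := by
          gcongr
      _ = K * ((1 + δ) - f (a • x + b • y)) := by
          simp only [map_add, map_smul, smul_eq_mul]
          linear_combination (K * (1 + δ)) * hab
  have hsub : Metric.closedBall (0 : X) 1 ∪ {(1 + δ) • x₀, -((1 + δ) • x₀)} ⊆ T := by
    rintro w (hw | hw | hw)
    · rw [mem_closedBall, dist_zero_right] at hw
      have hfw : f w ≤ 1 := by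
        have := ContinuousLinearMap.le_opNorm f w
        rw [hf, one_mul] at this
        calc f w ≤ ‖f w‖ := le_abs_self _
          _ ≤ ‖w‖ := this
          _ ≤ 1 := hw
      have hnorm : ‖w - (1 + δ) • x₀‖ ≤ 2 + δ := by
        refine (norm_sub_le _ _).trans ?_
        rw [norm_smul, Real.norm_eq_abs, abs_of_pos (by linarith : (0:ℝ) < 1 + δ), hx₀]
        linarith
      have hKδ : K * δ = 2 * (1 + δ) := by rw [hK]; field_simp
      have h2 : K * δ ≤ K * ((1 + δ) - f w) :=
        mul_le_mul_of_nonneg_left (by linarith) hKpos.le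
      simp only [hT, Set.mem_setOf_eq]
      linarith
    · subst hw
      show ‖(1 + δ) • x₀ - (1 + δ) • x₀‖ ≤ K * ((1 + δ) - f ((1 + δ) • x₀))
      rw [sub_self, norm_zero, map_smul, smul_eq_mul, hfx₀, mul_one, sub_self, mul_zero]
    · subst hw
      simp only [hT, Set.mem_setOf_eq, map_neg, map_smul, smul_eq_mul, hfx₀, mul_one]
      have h1 : -((1 + δ) • x₀) - (1 + δ) • x₀ = (-(2 * (1 + δ))) • x₀ := by
        rw [← neg_smul, ← sub_smul]
        congr 1
        ring
      rw [h1, norm_smul, Real.norm_eq_abs, hx₀, mul_one,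
        abs_of_nonpos (by linarith : -(2 * (1 + δ)) ≤ 0), neg_neg]
      have h2 : (1 + δ) - -(1 + δ) = 2 * (1 + δ) := by ring
      rw [h2, hK, div_mul_eq_mul_div, le_div_iff₀ hδ]
      nlinarith
  exact closure_minimal (convexHull_min hsub hconv) hclosed hv

end Aux

/-- In the renorming construction (`C_ε = B_X + εB_δ`, `|·|_ε = gauge C_ε`):
for all sufficiently small `r > 0`, the slice `{z ∈ C_ε : f z > 1 + ε(1+δ) - r}` of the
unit ball of `(X, |·|_ε)` has `|·|_ε`-diameter at most `2/(1+ε) + 6r(1+δ)/δ`; in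
particular, for `r` small enough, `(X, |·|_ε)` has slices of diameter strictly smaller
than `2`, and fails the r-big slice property (the slice lies in a `|·|_ε`-ball of radius
strictly smaller than `1`). -/
theorem slice_of_Ceps_small_diam
    (X : Type*) [NormedAddCommGroup X] [NormedSpace ℝ X] [CompleteSpace X]
    (x₀ : X) (hx₀ : ‖x₀‖ = 1) (f : StrongDual ℝ X) (hf : ‖f‖ = 1) (hfx₀ : f x₀ = 1)
    (δ ε : ℝ) (hδ : 0 < δ) (hε : 0 < ε) :
    ∃ r₀ > 0, ∀ r : ℝ, 0 < r → r < r₀ →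
      (∀ z ∈ {z ∈ Ceps x₀ δ ε | f z > 1 + ε * (1 + δ) - r},
       ∀ w ∈ {z ∈ Ceps x₀ δ ε | f z > 1 + ε * (1 + δ) - r},
        gauge (Ceps x₀ δ ε) (z - w) ≤ 2 / (1 + ε) + 6 * r * (1 + δ) / δ) ∧
      (∃ d : ℝ, d < 2 ∧
        ∀ z ∈ {z ∈ Ceps x₀ δ ε | f z > 1 + ε * (1 + δ) - r},
        ∀ w ∈ {z ∈ Ceps x₀ δ ε | f z > 1 + ε * (1 + δ) - r},
          gauge (Ceps x₀ δ ε) (z - w) ≤ d) ∧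
      (∃ (y : X) (ρ : ℝ), ρ < 1 ∧
        ∀ z ∈ {z ∈ Ceps x₀ δ ε | f z > 1 + ε * (1 + δ) - r},
          gauge (Ceps x₀ δ ε) (z - y) ≤ ρ) := by
  have h1ε : (0:ℝ) < 1 + ε := by linarith
  have h1δ : (0:ℝ) < 1 + δ := by linarith
  refine ⟨ε * δ / (2 * (1 + δ)), by positivity, ?_⟩
  intro r hr hrr₀
  set y : X := (ε * (1 + δ)) • x₀ with hy
  have key : ∀ z ∈ {z ∈ Ceps x₀ δ ε | f z > 1 + ε * (1 + δ) - r},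
      gauge (Ceps x₀ δ ε) (z - y) ≤ (1 + 2 * r * (1 + δ) / δ) / (1 + ε) := by
    rintro z ⟨hzC, hzf⟩
    obtain ⟨u, hu, w, hw, rfl⟩ := Set.mem_add.1 hzC
    obtain ⟨v, hv, rfl⟩ := Set.mem_smul_set.1 hw
    rw [mem_closedBall, dist_zero_right] at hu
    have hfu : f u ≤ 1 := by
      have h := ContinuousLinearMap.le_opNorm f u
      rw [hf, one_mul] at h
      calc f u ≤ ‖f u‖ := le_abs_self _
        _ ≤ ‖u‖ := h
        _ ≤ 1 := hu
    have hfz : f (u + ε • v) = f u + ε * f v := by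
      rw [map_add, map_smul, smul_eq_mul]
    rw [hfz] at hzf
    have hfv : (1 + δ) - f v ≤ r / ε := by
      rw [le_div_iff₀ hε]
      nlinarith
    have hkey := Bdelta_key hδ hx₀ f hf hfx₀ hv
    have hvb : ‖v - (1 + δ) • x₀‖ ≤ 2 * (1 + δ) / δ * (r / ε) :=
      hkey.trans (mul_le_mul_of_nonneg_left hfv (by positivity))
    have hdecomp : u + ε • v - y = u + ε • (v - (1 + δ) • x₀) := by
      rw [hy, smul_sub, smul_smul]
      abel
    have hnorm : ‖u + ε • v - y‖ ≤ 1 + 2 * r * (1 + δ) / δ := by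
      rw [hdecomp]
      calc ‖u + ε • (v - (1 + δ) • x₀)‖
          ≤ ‖u‖ + ε * ‖v - (1 + δ) • x₀‖ := by
            refine (norm_add_le _ _).trans ?_
            rw [norm_smul, Real.norm_eq_abs, abs_of_pos hε]
        _ ≤ 1 + ε * (2 * (1 + δ) / δ * (r / ε)) := by gcongr
        _ = 1 + 2 * r * (1 + δ) / δ := by
            field_simp
    calc gauge (Ceps x₀ δ ε) (u + ε • v - y) ≤ ‖u + ε • v - y‖ / (1 + ε) := gauge_Ceps_le hε _
      _ ≤ (1 + 2 * r * (1 + δ) / δ) / (1 + ε) := by gcongr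
  set ρ : ℝ := (1 + 2 * r * (1 + δ) / δ) / (1 + ε) with hρ
  have hA : (0:ℝ) ≤ 2 * r * (1 + δ) / δ := by positivity
  have hsmall : 2 * r * (1 + δ) / δ < ε := by
    rw [div_lt_iff₀ hδ]
    have h2 : r * (2 * (1 + δ)) < ε * δ := (lt_div_iff₀ (by positivity)).1 hrr₀
    nlinarith
  have hρ1 : ρ < 1 := by
    rw [hρ, div_lt_one h1ε]
    linarith
  have pair : ∀ z ∈ {z ∈ Ceps x₀ δ ε | f z > 1 + ε * (1 + δ) - r},
      ∀ w ∈ {z ∈ Ceps x₀ δ ε | f z > 1 + ε * (1 + δ) - r},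
      gauge (Ceps x₀ δ ε) (z - w) ≤ 2 * ρ := by
    intro z hz w hw
    have h1 := key z hz
    have h2 := key w hw
    have hsymm : gauge (Ceps x₀ δ ε) (y - w) = gauge (Ceps x₀ δ ε) (w - y) := by
      rw [← neg_sub w y, gauge_neg (fun x hx => Ceps_neg_mem hε.le hx)]
    calc gauge (Ceps x₀ δ ε) (z - w) = gauge (Ceps x₀ δ ε) ((z - y) + (y - w)) := by
          rw [sub_add_sub_cancel]
      _ ≤ gauge (Ceps x₀ δ ε) (z - y) + gauge (Ceps x₀ δ ε) (y - w) :=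
          gauge_add_le convex_Ceps (absorbent_Ceps hε) _ _
      _ = gauge (Ceps x₀ δ ε) (z - y) + gauge (Ceps x₀ δ ε) (w - y) := by rw [hsymm]
      _ ≤ ρ + ρ := add_le_add h1 h2
      _ = 2 * ρ := by ring
  refine ⟨?_, ⟨2 * ρ, by linarith, pair⟩, ⟨y, ρ, hρ1, key⟩⟩
  intro z hz w hw
  refine (pair z hz w hw).trans ?_
  have heq : 2 * ρ = 2 / (1 + ε) + 2 * (2 * r * (1 + δ) / δ) / (1 + ε) := by
    rw [hρ]; ring
  have hle : 2 * (2 * r * (1 + δ) / δ) / (1 + ε) ≤ 2 * (2 * r * (1 + δ) / δ) :=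
    div_le_self (by positivity) (by linarith)
  have h6 : 6 * r * (1 + δ) / δ = 3 * (2 * r * (1 + δ) / δ) := by ring
  linarith
end

section
/- Let X be a Banach space with the Daugavet property, and construct (X, |·|_ε) as follows: x_0 ∈ S_X, f ∈ S_{X*} with f(x_0) = 1, δ > 0, B_δ := closed convex hull of B_X ∪ {±(1+δ)x_0}, C_ε := B_X + εB_δ, |·|_ε the Minkowski functional of C_ε. Then for every x with |x|_ε = 1, every η > 0, and every convex combination of slices C of the unit ball C_ε of (X, |·|_ε), there exists y ∈ C with |x - y|_ε ≥ (2 - 3ε(1+δ) - η)/(1 + ε(1+δ)). -/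
open NormedSpace Metric
open scoped Pointwise BigOperators

/-- The convex combination of slices `Σ λᵢ S(B, gᵢ, αᵢ)` of a set `B`. -/
def convexCombOfSlices {X : Type*} [NormedAddCommGroup X] [NormedSpace ℝ X]
    (B : Set X) {n : ℕ} (lam : Fin n → ℝ) (g : Fin n → StrongDual ℝ X)
    (α : Fin n → ℝ) : Set X :=
  {y : X | ∃ z : Fin n → X, (∀ i, z i ∈ B ∧ g i (z i) > 1 - α i) ∧
    y = ∑ i, lam i • z i}

section Aux
variable {X : Type*} [NormedAddCommGroup X] [NormedSpace ℝ X]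

lemma Bdelta_convex (x₀ : X) (δ : ℝ) : Convex ℝ (Bdelta x₀ δ) :=
  (convex_convexHull ℝ _).closure

lemma Bdelta_subset (x₀ : X) (hx₀ : ‖x₀‖ = 1) {δ : ℝ} (hδ : 0 < δ) :
    Bdelta x₀ δ ⊆ closedBall (0 : X) (1 + δ) := by
  refine closure_minimal (convexHull_min ?_ (convex_closedBall _ _)) isClosed_closedBall
  rintro u (hu | rfl | rfl)
  · exact closedBall_subset_closedBall (by linarith) hu
  · simp [mem_closedBall, dist_zero_right, norm_smul, hx₀,
      abs_of_pos (by linarith : (0:ℝ) < 1 + δ)]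
  · simp [mem_closedBall, dist_zero_right, norm_smul, hx₀,
      abs_of_pos (by linarith : (0:ℝ) < 1 + δ)]

lemma Bdelta_zero_mem (x₀ : X) (δ : ℝ) : (0 : X) ∈ Bdelta x₀ δ :=
  subset_closure (subset_convexHull ℝ _ (Or.inl (mem_closedBall_self zero_le_one)))

lemma ball_subset_Ceps (x₀ : X) (δ ε : ℝ) :
    closedBall (0 : X) 1 ⊆ Ceps x₀ δ ε := by
  intro a ha
  refine ⟨a, ha, 0, ?_, by simp⟩
  exact ⟨0, Bdelta_zero_mem x₀ δ, by simp⟩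

lemma Ceps_subset (x₀ : X) (hx₀ : ‖x₀‖ = 1) {δ ε : ℝ} (hδ : 0 < δ) (hε : 0 < ε) :
    Ceps x₀ δ ε ⊆ closedBall (0 : X) (1 + ε * (1 + δ)) := by
  rintro v ⟨a, ha, w, ⟨d, hd, rfl⟩, rfl⟩
  have hda : ‖d‖ ≤ 1 + δ := by
    simpa [mem_closedBall, dist_zero_right] using Bdelta_subset x₀ hx₀ hδ hd
  simp only [mem_closedBall, dist_zero_right] at ha ⊢
  calc ‖a + ε • d‖ ≤ ‖a‖ + ‖ε • d‖ := norm_add_le _ _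
    _ ≤ 1 + ε * (1 + δ) := by
        rw [norm_smul, Real.norm_eq_abs, abs_of_pos hε]
        have : ε * ‖d‖ ≤ ε * (1 + δ) := by nlinarith [norm_nonneg d]
        linarith

end Aux


/-- Let `X` have the Daugavet property (hypothesis `hD`, in the
convex-combinations-of-slices form) and construct `B_δ`, `C_ε` and `|·|_ε = gauge C_ε`
from `x₀ ∈ S_X`, `f ∈ S_{X*}` with `f(x₀) = 1` and `δ, ε > 0`. Then for every `x` with
`|x|_ε = 1`, every `η > 0` and every convex combination of slices `C` of the unit ball
`C_ε` of `(X, |·|_ε)` (the slicing functionals being norm-one for `|·|_ε^*`, i.e. with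
supremum `1` on `C_ε`), there is `y ∈ C` with
`|x - y|_ε ≥ (2 - 3ε(1+δ) - η)/(1 + ε(1+δ))`. -/
theorem renorming_thick_convex_combinations
    (X : Type*) [NormedAddCommGroup X] [NormedSpace ℝ X] [CompleteSpace X]
    (hD : ∀ x : X, ‖x‖ = 1 → ∀ (n : ℕ) (lam : Fin n → ℝ), (∀ i, 0 ≤ lam i) →
      (∑ i, lam i) = 1 → ∀ g : Fin n → StrongDual ℝ X, (∀ i, ‖g i‖ = 1) →
      ∀ α : Fin n → ℝ, (∀ i, 0 < α i) → ∀ η : ℝ, 0 < η →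
      ∃ y ∈ convexCombOfSlices (Metric.closedBall (0 : X) 1) lam g α, ‖x - y‖ > 2 - η)
    (x₀ : X) (hx₀ : ‖x₀‖ = 1) (f : StrongDual ℝ X) (hf : ‖f‖ = 1) (hfx₀ : f x₀ = 1)
    (δ ε : ℝ) (hδ : 0 < δ) (hε : 0 < ε) :
    ∀ x : X, gauge (Ceps x₀ δ ε) x = 1 →
    ∀ (n : ℕ) (lam : Fin n → ℝ), (∀ i, 0 ≤ lam i) → (∑ i, lam i) = 1 →
    ∀ g : Fin n → StrongDual ℝ X, (∀ i, sSup (g i '' Ceps x₀ δ ε) = 1) →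
    ∀ α : Fin n → ℝ, (∀ i, 0 < α i) → ∀ η : ℝ, 0 < η →
    ∃ y ∈ convexCombOfSlices (Ceps x₀ δ ε) lam g α,
      gauge (Ceps x₀ δ ε) (x - y) ≥ (2 - 3 * ε * (1 + δ) - η) / (1 + ε * (1 + δ)) := by
  intro x hx n lam hlam hlam1 g hg α hα η hη
  set r : ℝ := 1 + ε * (1 + δ) with hr_def
  have hr1 : (1 : ℝ) < r := by
    have : 0 < ε * (1 + δ) := by positivity
    simp [hr_def]; linarith
  have hr0 : (0 : ℝ) < r := by linarith
  have hCsub : Ceps x₀ δ ε ⊆ closedBall (0 : X) r := Ceps_subset x₀ hx₀ hδ hε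
  have hballC : closedBall (0 : X) 1 ⊆ Ceps x₀ δ ε := ball_subset_Ceps x₀ δ ε
  have habs1 : Absorbent ℝ (closedBall (0 : X) 1) :=
    (absorbent_ball_zero one_pos).mono ball_subset_closedBall
  have habsC : Absorbent ℝ (Ceps x₀ δ ε) := habs1.mono hballC
  -- gauge bounds
  have hgauge_le : ∀ u : X, gauge (Ceps x₀ δ ε) u ≤ ‖u‖ := by
    intro u
    have := gauge_mono habs1 hballC u
    rwa [gauge_closedBall zero_le_one, div_one] at this
  have hgauge_ge : ∀ u : X, ‖u‖ / r ≤ gauge (Ceps x₀ δ ε) u := by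
    intro u
    have := gauge_mono habsC hCsub u
    rwa [gauge_closedBall hr0.le] at this
  -- norm bounds on x
  have hx1 : 1 ≤ ‖x‖ := by have := hgauge_le x; rw [hx] at this; linarith
  have hxr : ‖x‖ ≤ r := by
    have := hgauge_ge x; rw [hx] at this
    exact (div_le_one hr0).mp this
  have hxne : x ≠ 0 := by
    intro h; rw [h, norm_zero] at hx1; linarith
  have hxpos : (0 : ℝ) < ‖x‖ := by linarith
  -- functional bounds
  have hgle : ∀ i, ‖g i‖ ≤ 1 := by
    intro i
    have hbdd : BddAbove (g i '' Ceps x₀ δ ε) := by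
      refine ⟨‖g i‖ * r, ?_⟩
      rintro v ⟨u, hu, rfl⟩
      have := (g i).le_opNorm u
      have hur : ‖u‖ ≤ r := by simpa [mem_closedBall, dist_zero_right] using hCsub hu
      calc g i u ≤ |g i u| := le_abs_self _
        _ ≤ ‖g i‖ * ‖u‖ := this
        _ ≤ ‖g i‖ * r := by nlinarith [norm_nonneg (g i)]
    have hle1 : ∀ u : X, ‖u‖ ≤ 1 → g i u ≤ 1 := by
      intro u hu
      have : g i u ∈ g i '' Ceps x₀ δ ε :=
        ⟨u, hballC (by simpa [mem_closedBall, dist_zero_right] using hu), rfl⟩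
      have := le_csSup hbdd this
      rwa [hg i] at this
    refine ContinuousLinearMap.opNorm_le_bound _ zero_le_one ?_
    intro u
    rcases eq_or_ne u 0 with rfl | hu
    · simp
    · have hun : (0:ℝ) < ‖u‖ := norm_pos_iff.mpr hu
      have h1 : g i (‖u‖⁻¹ • u) ≤ 1 := hle1 _ (by rw [norm_smul]; simp [abs_of_pos hun, inv_mul_cancel₀ hun.ne'])
      have h2 : g i (-(‖u‖⁻¹ • u)) ≤ 1 := hle1 _ (by rw [norm_neg, norm_smul]; simp [abs_of_pos hun, inv_mul_cancel₀ hun.ne'])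
      rw [map_smul] at h1
      rw [map_neg, map_smul] at h2
      simp only [smul_eq_mul] at h1 h2
      rw [Real.norm_eq_abs, one_mul]
      have hc : ‖u‖ * ‖u‖⁻¹ = 1 := mul_inv_cancel₀ hun.ne'
      have ha : g i u ≤ ‖u‖ := by
        have := mul_le_mul_of_nonneg_left h1 hun.le
        rw [← mul_assoc, hc, one_mul, mul_one] at this
        exact this
      have hb' : -(g i u) ≤ ‖u‖ := by
        have := mul_le_mul_of_nonneg_left h2 hun.le
        rw [mul_neg, ← mul_assoc, hc, one_mul, mul_one] at this
        exact this
      rw [abs_le]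
      exact ⟨by linarith, ha⟩
  have hgne : ∀ i, g i ≠ 0 := by
    intro i h0
    have h1 := hg i
    have hne : (g i '' Ceps x₀ δ ε).Nonempty :=
      ⟨g i 0, ⟨0, hballC (mem_closedBall_self zero_le_one), rfl⟩⟩
    have : sSup (g i '' Ceps x₀ δ ε) ≤ 0 := by
      apply Real.sSup_le _ le_rfl
      rintro v ⟨u, hu, rfl⟩
      simp [h0]
    rw [h1] at this; linarith
  have hgpos : ∀ i, (0:ℝ) < ‖g i‖ := fun i => norm_pos_iff.mpr (hgne i)
  -- choose near-optimal points z i ∈ Ceps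
  have hz : ∀ i, ∃ z ∈ Ceps x₀ δ ε, g i z > 1 - α i / 2 := by
    intro i
    have hne : (g i '' Ceps x₀ δ ε).Nonempty :=
      ⟨g i 0, ⟨0, hballC (mem_closedBall_self zero_le_one), rfl⟩⟩
    have hlt : 1 - α i / 2 < sSup (g i '' Ceps x₀ δ ε) := by
      rw [hg i]; linarith [hα i]
    obtain ⟨v, ⟨u, hu, rfl⟩, hv⟩ := exists_lt_of_lt_csSup hne hlt
    exact ⟨u, hu, hv⟩
  choose z hzC hzS using hz
  -- decompose z i = b i + ε • d i
  have hdec : ∀ i, ∃ b ∈ closedBall (0:X) 1, ∃ d ∈ Bdelta x₀ δ, z i = b + ε • d := by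
    intro i
    obtain ⟨b, hb, w, ⟨d, hd, rfl⟩, hw⟩ := hzC i
    exact ⟨b, hb, d, hd, hw.symm⟩
  choose b hb d hd hzd using hdec
  -- normalized functionals
  set h : Fin n → StrongDual ℝ X := fun i => (‖g i‖)⁻¹ • g i with hh_def
  have hhnorm : ∀ i, ‖h i‖ = 1 := by
    intro i
    rw [hh_def]
    simp only [norm_smul, Real.norm_eq_abs, abs_of_pos (inv_pos.mpr (hgpos i))]
    exact inv_mul_cancel₀ (hgpos i).ne'
  -- apply Daugavet at x' = x/‖x‖
  obtain ⟨y', ⟨w, hw, rfl⟩, hxy'⟩ :=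
    hD (‖x‖⁻¹ • x) (by rw [norm_smul]; simp [abs_of_pos (inv_pos.mpr hxpos), inv_mul_cancel₀ hxpos.ne'])
      n lam hlam hlam1 h hhnorm (fun i => α i / 2) (fun i => by linarith [hα i]) η hη
  -- construct y
  refine ⟨∑ i, lam i • (w i + ε • d i), ⟨fun i => w i + ε • d i, ?_, rfl⟩, ?_⟩
  · intro i
    obtain ⟨hwB, hwS⟩ := hw i
    constructor
    · exact ⟨w i, hwB, ε • d i, ⟨d i, hd i, rfl⟩, rfl⟩
    · -- g i (w i + ε • d i) > 1 - α i
      have hgw : g i (w i) > ‖g i‖ * (1 - α i / 2) := by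
        have h1 : (‖g i‖)⁻¹ * g i (w i) > 1 - α i / 2 := by
          have := hwS
          simp only [hh_def, ContinuousLinearMap.smul_apply, smul_eq_mul] at this
          exact this
        have h2 := mul_lt_mul_of_pos_left h1 (hgpos i)
        rwa [← mul_assoc, mul_inv_cancel₀ (hgpos i).ne', one_mul] at h2
      have hgb : g i (b i) ≤ ‖g i‖ := by
        have h1 := (g i).le_opNorm (b i)
        have h2 : ‖b i‖ ≤ 1 := by simpa [mem_closedBall, dist_zero_right] using hb i
        calc g i (b i) ≤ |g i (b i)| := le_abs_self _
          _ ≤ ‖g i‖ * ‖b i‖ := h1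
          _ ≤ ‖g i‖ := by nlinarith [norm_nonneg (g i)]
      have hgz : g i (b i) + ε * g i (d i) > 1 - α i / 2 := by
        have := hzS i
        rw [hzd i] at this
        simpa [map_add, map_smul, smul_eq_mul] using this
      have : g i (w i + ε • d i) = g i (w i) + ε * g i (d i) := by
        simp [map_add, map_smul, smul_eq_mul]
      rw [this]
      have hgle' := hgle i
      have hαi := hα i
      nlinarith [mul_nonneg (sub_nonneg.mpr hgle') hαi.le]
  · -- the gauge estimate
    set y := ∑ i, lam i • (w i + ε • d i) with hy_def
    set y' := ∑ i, lam i • w i with hy'_def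
    have hdmem : (∑ i, lam i • d i) ∈ Bdelta x₀ δ := by
      refine Convex.sum_mem (Bdelta_convex x₀ δ) (fun i _ => hlam i) ?_ (fun i _ => hd i)
      simpa using hlam1
    have hdnorm : ‖∑ i, lam i • d i‖ ≤ 1 + δ := by
      simpa [mem_closedBall, dist_zero_right] using Bdelta_subset x₀ hx₀ hδ hdmem
    have hyy' : y - y' = ε • ∑ i, lam i • d i := by
      rw [hy_def, hy'_def, Finset.smul_sum, ← Finset.sum_sub_distrib]
      congr 1
      ext i
      rw [smul_add]
      rw [smul_comm]
      abel
    have hyy'n : ‖y - y'‖ ≤ ε * (1 + δ) := by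
      rw [hyy', norm_smul, Real.norm_eq_abs, abs_of_pos hε]
      exact (mul_le_mul_of_nonneg_left hdnorm hε.le)
    have hxx' : ‖x - ‖x‖⁻¹ • x‖ = ‖x‖ - 1 := by
      have : x - ‖x‖⁻¹ • x = (1 - ‖x‖⁻¹) • x := by
        rw [sub_smul, one_smul]
      rw [this, norm_smul, Real.norm_eq_abs]
      have h1 : ‖x‖⁻¹ ≤ 1 := by
        rw [inv_le_one_iff₀]; right; exact hx1
      rw [abs_of_nonneg (by linarith)]
      field_simp
    have hxx'le : ‖x - ‖x‖⁻¹ • x‖ ≤ ε * (1 + δ) := by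
      rw [hxx']; rw [hr_def] at hxr; linarith
    have htri : ‖x‖⁻¹ • x - y' = (x - y) + ((‖x‖⁻¹ • x - x) + (y - y')) := by abel
    have hkey : ‖x - y‖ > 2 - 2 * (ε * (1 + δ)) - η := by
      have h1 : ‖‖x‖⁻¹ • x - y'‖ ≤ ‖x - y‖ + (‖‖x‖⁻¹ • x - x‖ + ‖y - y'‖) := by
        rw [htri]
        exact (norm_add_le _ _).trans (by gcongr; exact norm_add_le _ _)
      have h2 : ‖‖x‖⁻¹ • x - x‖ = ‖x - ‖x‖⁻¹ • x‖ := by rw [norm_sub_rev]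
      rw [h2] at h1
      linarith [hxy']
    have hge := hgauge_ge (x - y)
    have hεδ : (0:ℝ) ≤ ε * (1 + δ) := by positivity
    have h3 : 3 * ε * (1 + δ) = ε * (1 + δ) + 2 * (ε * (1 + δ)) := by ring
    have hnum : (2 - 3 * ε * (1 + δ) - η) ≤ ‖x - y‖ := by linarith
    have hstep : (2 - 3 * ε * (1 + δ) - η) / r ≤ ‖x - y‖ / r := by gcongr
    exact le_trans hstep hge
end
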